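/- Conversely, if Φ : ℝ^N → ℝ is a function such that both Φ + (σ/2)‖·‖² is convex and Φ − (σ/2)‖·‖² is concave for some σ > 0, then Φ is differentiable and its gradient is σ-Lipschitz. -/

import Mathlib

open scoped RealInnerProductSpace
open Set

variable {E : Type*} [NormedAddCommGroup E] [InnerProductSpace ℝ E]

lemma norm_combo_sq (a b : ℝ) (hab : a + b = 1) (u w : E) :
    ‖a • u + b • w‖ ^ 2 = a * ‖u‖ ^ 2 + b * ‖w‖ ^ 2 - a * b * ‖u - w‖ ^ 2 := by
  have h1 : ‖a • u + b • w‖ ^ 2 = a^2 * ‖u‖^2 + 2*(a*b)*⟪u,w⟫ + b^2*‖w‖^2 := by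
    rw [norm_add_sq_real]
    simp only [norm_smul, real_inner_smul_left, real_inner_smul_right, mul_pow,
      Real.norm_eq_abs, sq_abs]
    ring
  have h2 : ‖u - w‖ ^ 2 = ‖u‖^2 - 2*⟪u,w⟫ + ‖w‖^2 := norm_sub_sq_real u w
  linear_combination h1 + a*b*h2 + (a*‖u‖^2 + b*‖w‖^2)*hab

/-- generalized convexity: Φ + σ/2‖·‖² convex rephrased -/
lemma QC_of_convex {σ : ℝ} {Φ : E → ℝ}
    (hconv : ConvexOn ℝ Set.univ (fun x => Φ x + (σ / 2) * ‖x‖ ^ 2)) :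
    ∀ (a b : ℝ) (u w : E), 0 ≤ a → 0 ≤ b → a + b = 1 →
      Φ (a • u + b • w) ≤ a * Φ u + b * Φ w + σ/2 * (a*b) * ‖u - w‖^2 := by
  intro a b u w ha hb hab
  have h := hconv.2 (Set.mem_univ u) (Set.mem_univ w) ha hb hab
  simp only at h
  rw [norm_combo_sq a b hab u w] at h
  simp only [smul_eq_mul] at h; nlinarith [h]

lemma QK_of_concave {σ : ℝ} {Φ : E → ℝ}
    (hconc : ConcaveOn ℝ Set.univ (fun x => Φ x - (σ / 2) * ‖x‖ ^ 2)) :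
    ∀ (a b : ℝ) (u w : E), 0 ≤ a → 0 ≤ b → a + b = 1 →
      a * Φ u + b * Φ w - σ/2 * (a*b) * ‖u - w‖^2 ≤ Φ (a • u + b • w) := by
  intro a b u w ha hb hab
  have h := hconc.2 (Set.mem_univ u) (Set.mem_univ w) ha hb hab
  simp only at h
  rw [norm_combo_sq a b hab u w] at h
  simp only [smul_eq_mul] at h; nlinarith [h]

noncomputable def pfun (σ : ℝ) (Φ : E → ℝ) (x v : E) (t : ℝ) : ℝ :=
  (Φ (x + t • v) - Φ x)/t + σ*t/2 * ‖v‖^2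

noncomputable def mfun (σ : ℝ) (Φ : E → ℝ) (x v : E) (t : ℝ) : ℝ :=
  (Φ (x + t • v) - Φ x)/t - σ*t/2 * ‖v‖^2

lemma combo_eq {t s : ℝ} (hs : s ≠ 0) (x v : E) :
    (1 - t/s) • x + (t/s) • (x + s • v) = x + t • v := by
  rw [smul_add, smul_smul, div_mul_cancel₀ _ hs]
  module

lemma pmono {σ : ℝ} {Φ : E → ℝ}
    (hQC : ∀ (a b : ℝ) (u w : E), 0 ≤ a → 0 ≤ b → a + b = 1 →
      Φ (a • u + b • w) ≤ a * Φ u + b * Φ w + σ/2 * (a*b) * ‖u - w‖^2)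
    (x v : E) {t s : ℝ} (ht : 0 < t) (hts : t ≤ s) :
    pfun σ Φ x v t ≤ pfun σ Φ x v s := by
  have hs : 0 < s := lt_of_lt_of_le ht hts
  have ha : (0:ℝ) ≤ 1 - t/s := by
    rw [sub_nonneg, div_le_one hs]; exact hts
  have hb : (0:ℝ) ≤ t/s := le_of_lt (div_pos ht hs)
  have h := hQC (1 - t/s) (t/s) x (x + s • v) ha hb (by ring)
  rw [combo_eq hs.ne' x v] at h
  have hw : x - (x + s • v) = (-s) • v := by module
  rw [hw, norm_smul] at h
  simp only [Real.norm_eq_abs, mul_pow, sq_abs] at h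
  unfold pfun
  have hn : (0:ℝ) ≤ ‖v‖^2 := sq_nonneg _
  rw [div_add' _ _ _ ht.ne', div_add' _ _ _ hs.ne', div_le_div_iff₀ ht hs]
  field_simp at h
  nlinarith [h, mul_pos ht hs, mul_pos hs hs, sq_nonneg (s - t)]

lemma mmono {σ : ℝ} {Φ : E → ℝ}
    (hQK : ∀ (a b : ℝ) (u w : E), 0 ≤ a → 0 ≤ b → a + b = 1 →
      a * Φ u + b * Φ w - σ/2 * (a*b) * ‖u - w‖^2 ≤ Φ (a • u + b • w))
    (x v : E) {t s : ℝ} (ht : 0 < t) (hts : t ≤ s) :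
    mfun σ Φ x v s ≤ mfun σ Φ x v t := by
  have hs : 0 < s := lt_of_lt_of_le ht hts
  have ha : (0:ℝ) ≤ 1 - t/s := by
    rw [sub_nonneg, div_le_one hs]; exact hts
  have hb : (0:ℝ) ≤ t/s := le_of_lt (div_pos ht hs)
  have h := hQK (1 - t/s) (t/s) x (x + s • v) ha hb (by ring)
  rw [combo_eq hs.ne' x v] at h
  have hw : x - (x + s • v) = (-s) • v := by module
  rw [hw, norm_smul] at h
  simp only [Real.norm_eq_abs, mul_pow, sq_abs] at h
  unfold mfun
  have hn : (0:ℝ) ≤ ‖v‖^2 := sq_nonneg _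
  rw [div_sub' hs.ne', div_sub' ht.ne', div_le_div_iff₀ hs ht]
  field_simp at h
  nlinarith [h, mul_pos ht hs, mul_pos hs hs, sq_nonneg (s - t)]

section D
variable {σ : ℝ} {Φ : E → ℝ}

lemma m_le_p_self (hσ : 0 < σ) (x v : E) {t : ℝ} (ht : 0 < t) :
    mfun σ Φ x v t ≤ pfun σ Φ x v t := by
  unfold mfun pfun
  nlinarith [sq_nonneg ‖v‖, mul_pos hσ ht]

variable (hσ : 0 < σ)
  (hQC : ∀ (a b : ℝ) (u w : E), 0 ≤ a → 0 ≤ b → a + b = 1 →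
    Φ (a • u + b • w) ≤ a * Φ u + b * Φ w + σ/2 * (a*b) * ‖u - w‖^2)
  (hQK : ∀ (a b : ℝ) (u w : E), 0 ≤ a → 0 ≤ b → a + b = 1 →
    a * Φ u + b * Φ w - σ/2 * (a*b) * ‖u - w‖^2 ≤ Φ (a • u + b • w))

include hσ hQC hQK

lemma m_le_p (x v : E) {t s : ℝ} (ht : 0 < t) (hs : 0 < s) :
    mfun σ Φ x v s ≤ pfun σ Φ x v t := by
  rcases le_total t s with h | h
  · exact le_trans (mmono hQK x v ht h) (le_trans (m_le_p_self hσ x v ht) (le_refl _))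
  · exact le_trans (m_le_p_self hσ x v hs) (pmono hQC x v hs h)

end D

noncomputable def Dfun (σ : ℝ) (Φ : E → ℝ) (x v : E) : ℝ :=
  sInf (pfun σ Φ x v '' Set.Ioi 0)

section D2
variable {σ : ℝ} {Φ : E → ℝ}
variable (hσ : 0 < σ)
  (hQC : ∀ (a b : ℝ) (u w : E), 0 ≤ a → 0 ≤ b → a + b = 1 →
    Φ (a • u + b • w) ≤ a * Φ u + b * Φ w + σ/2 * (a*b) * ‖u - w‖^2)
  (hQK : ∀ (a b : ℝ) (u w : E), 0 ≤ a → 0 ≤ b → a + b = 1 →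
    a * Φ u + b * Φ w - σ/2 * (a*b) * ‖u - w‖^2 ≤ Φ (a • u + b • w))

include hσ hQC hQK

lemma Dfun_bddBelow (x v : E) : BddBelow (pfun σ Φ x v '' Set.Ioi 0) := by
  refine ⟨mfun σ Φ x v 1, ?_⟩
  rintro r ⟨t, ht, rfl⟩
  exact m_le_p hσ hQC hQK x v ht one_pos

lemma Dfun_nonempty (x v : E) : (pfun σ Φ x v '' Set.Ioi 0).Nonempty :=
  ⟨pfun σ Φ x v 1, 1, Set.mem_Ioi.mpr one_pos, rfl⟩

lemma Dfun_le_p (x v : E) {t : ℝ} (ht : 0 < t) : Dfun σ Φ x v ≤ pfun σ Φ x v t :=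
  csInf_le (Dfun_bddBelow hσ hQC hQK x v) ⟨t, ht, rfl⟩

lemma m_le_Dfun (x v : E) {s : ℝ} (hs : 0 < s) : mfun σ Φ x v s ≤ Dfun σ Φ x v := by
  apply le_csInf (Dfun_nonempty hσ hQC hQK x v)
  rintro r ⟨t, ht, rfl⟩
  exact m_le_p hσ hQC hQK x v ht hs

/-- the key sandwich at t = 1 -/
lemma Dfun_sandwich (x y : E) :
    |Φ y - Φ x - Dfun σ Φ x (y - x)| ≤ σ/2 * ‖y - x‖^2 := by
  have h1 : Dfun σ Φ x (y - x) ≤ pfun σ Φ x (y - x) 1 := Dfun_le_p hσ hQC hQK x _ one_pos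
  have h2 : mfun σ Φ x (y - x) 1 ≤ Dfun σ Φ x (y - x) := m_le_Dfun hσ hQC hQK x _ one_pos
  unfold pfun at h1
  unfold mfun at h2
  simp only [one_smul, add_sub_cancel, div_one] at h1 h2
  rw [abs_le]
  constructor <;> nlinarith [h1, h2]

end D2

section D3
variable {σ : ℝ} {Φ : E → ℝ}
variable (hσ : 0 < σ)
  (hQC : ∀ (a b : ℝ) (u w : E), 0 ≤ a → 0 ≤ b → a + b = 1 →
    Φ (a • u + b • w) ≤ a * Φ u + b * Φ w + σ/2 * (a*b) * ‖u - w‖^2)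
  (hQK : ∀ (a b : ℝ) (u w : E), 0 ≤ a → 0 ≤ b → a + b = 1 →
    a * Φ u + b * Φ w - σ/2 * (a*b) * ‖u - w‖^2 ≤ Φ (a • u + b • w))

omit hσ hQC hQK in
lemma Dfun_zero (x : E) : Dfun σ Φ x 0 = 0 := by
  have himg : pfun σ Φ x 0 '' Set.Ioi 0 = {0} := by
    refine Set.eq_singleton_iff_nonempty_unique_mem.mpr
      ⟨⟨pfun σ Φ x 0 1, ⟨1, Set.mem_Ioi.mpr one_pos, rfl⟩⟩, ?_⟩
    rintro r ⟨t, ht, rfl⟩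
    simp [pfun]
  rw [Dfun, himg, csInf_singleton]

include hσ hQC hQK

lemma p_subadd (x v w : E) {t : ℝ} (ht : 0 < t) :
    pfun σ Φ x (v + w) t ≤ pfun σ Φ x v (2*t) + pfun σ Φ x w (2*t) := by
  have h2t : (0:ℝ) < 2*t := by linarith
  have h := hQC (1/2) (1/2) (x + (2*t) • v) (x + (2*t) • w) (by norm_num) (by norm_num)
    (by norm_num)
  have hc : (1/2 : ℝ) • (x + (2*t) • v) + (1/2 : ℝ) • (x + (2*t) • w) = x + t • (v + w) := by
    module
  have hd : (x + (2*t) • v) - (x + (2*t) • w) = (2*t) • (v - w) := by module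
  rw [hc, hd, norm_smul] at h
  simp only [Real.norm_eq_abs, mul_pow, sq_abs] at h
  unfold pfun
  have hvw : ‖v + w‖^2 = 2*‖v‖^2 + 2*‖w‖^2 - ‖v - w‖^2 := by
    nlinarith [norm_add_sq_real v w, norm_sub_sq_real v w]
  rw [hvw, ← sub_nonneg]
  have h0 : 0 ≤ (Φ (x+(2*t)•v) + Φ (x+(2*t)•w) - 2*Φ (x + t•(v+w)) + σ*t^2*‖v-w‖^2)/(2*t) := by
    apply div_nonneg _ (by linarith)
    nlinarith [h]
  convert h0 using 1
  field_simp
  ring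

lemma Dfun_add_le (x v w : E) :
    Dfun σ Φ x (v + w) ≤ Dfun σ Φ x v + Dfun σ Φ x w := by
  have key : ∀ s u : ℝ, 0 < s → 0 < u →
      Dfun σ Φ x (v + w) ≤ pfun σ Φ x v s + pfun σ Φ x w u := by
    intro s u hs hu
    have htpos : 0 < min s u / 2 := by positivity
    calc Dfun σ Φ x (v + w) ≤ pfun σ Φ x (v + w) (min s u / 2) :=
          Dfun_le_p hσ hQC hQK x _ htpos
      _ ≤ pfun σ Φ x v (2*(min s u / 2)) + pfun σ Φ x w (2*(min s u / 2)) :=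
          p_subadd hσ hQC hQK x v w htpos
      _ ≤ pfun σ Φ x v s + pfun σ Φ x w u := by
          have e : 2*(min s u / 2) = min s u := by ring
          rw [e]
          have hmpos : 0 < min s u := lt_min hs hu
          exact add_le_add (pmono hQC x v hmpos (min_le_left s u))
            (pmono hQC x w hmpos (min_le_right s u))
  have h1 : ∀ u : ℝ, 0 < u → Dfun σ Φ x (v + w) - pfun σ Φ x w u ≤ Dfun σ Φ x v := by
    intro u hu
    apply le_csInf (Dfun_nonempty hσ hQC hQK x v)
    rintro r ⟨s, hs, rfl⟩
    linarith [key s u (Set.mem_Ioi.mp hs) hu]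
  have h2 : Dfun σ Φ x (v + w) - Dfun σ Φ x v ≤ Dfun σ Φ x w := by
    apply le_csInf (Dfun_nonempty hσ hQC hQK x w)
    rintro r ⟨u, hu, rfl⟩
    linarith [h1 u (Set.mem_Ioi.mp hu)]
  linarith

lemma Dfun_add_neg (x v : E) : Dfun σ Φ x v + Dfun σ Φ x (-v) = 0 := by
  have hge : 0 ≤ Dfun σ Φ x v + Dfun σ Φ x (-v) := by
    have := Dfun_add_le hσ hQC hQK x v (-v)
    rw [add_neg_cancel, Dfun_zero] at this
    linarith
  have hkey : ∀ t : ℝ, 0 < t → Dfun σ Φ x v + Dfun σ Φ x (-v) ≤ 2*σ*t*‖v‖^2 := by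
    intro t ht
    have h1 : Dfun σ Φ x v ≤ pfun σ Φ x v t := Dfun_le_p hσ hQC hQK x v ht
    have h2 : Dfun σ Φ x (-v) ≤ pfun σ Φ x (-v) t := Dfun_le_p hσ hQC hQK x (-v) ht
    have hmid := hQK (1/2) (1/2) (x + t • v) (x + t • (-v)) (by norm_num) (by norm_num)
      (by norm_num)
    have hc1 : (1/2 : ℝ) • (x + t • v) + (1/2 : ℝ) • (x + t • (-v)) = x := by module
    have hd1 : (x + t • v) - (x + t • (-v)) = (2*t) • v := by module
    rw [hc1, hd1, norm_smul] at hmid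
    simp only [Real.norm_eq_abs, mul_pow, sq_abs] at hmid
    have hsum : (Φ (x + t • v) - Φ x)/t + (Φ (x + t • (-v)) - Φ x)/t ≤ σ*t*‖v‖^2 := by
      rw [← add_div, div_le_iff₀ ht]
      nlinarith [hmid]
    have hps : pfun σ Φ x v t + pfun σ Φ x (-v) t ≤ 2*σ*t*‖v‖^2 := by
      unfold pfun
      rw [norm_neg]
      linarith [hsum]
    linarith
  have hle : Dfun σ Φ x v + Dfun σ Φ x (-v) ≤ 0 := by
    by_cases hv : v = 0
    · subst hv; simp only [neg_zero, Dfun_zero]; norm_num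
    · have hB : 0 < 2*σ*‖v‖^2 := by
        have : 0 < ‖v‖ := norm_pos_iff.mpr hv
        positivity
      by_contra hcon
      push_neg at hcon
      set c := Dfun σ Φ x v + Dfun σ Φ x (-v) with hcdef
      have ht0 : (0:ℝ) < c / (2*(2*σ*‖v‖^2)) := by positivity
      have := hkey _ ht0
      have heq : 2*σ*(c / (2*(2*σ*‖v‖^2)))*‖v‖^2 = c/2 := by
        field_simp
      rw [heq] at this
      linarith
  linarith

lemma Dfun_add (x v w : E) :
    Dfun σ Φ x (v + w) = Dfun σ Φ x v + Dfun σ Φ x w := by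
  refine le_antisymm (Dfun_add_le hσ hQC hQK x v w) ?_
  have h1 : Dfun σ Φ x v ≤ Dfun σ Φ x (v + w) + Dfun σ Φ x (-w) := by
    have := Dfun_add_le hσ hQC hQK x (v + w) (-w)
    rw [add_neg_cancel_right] at this
    exact this
  have h2 := Dfun_add_neg hσ hQC hQK x w
  linarith

lemma Dfun_smul (x v : E) (c : ℝ) :
    Dfun σ Φ x (c • v) = c * Dfun σ Φ x v := by
  have hpos : ∀ (c : ℝ), 0 < c → Dfun σ Φ x (c • v) = c * Dfun σ Φ x v := by
    intro c hc
    have hp : ∀ t : ℝ, 0 < t → pfun σ Φ x (c • v) t = c * pfun σ Φ x v (t*c) := by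
      intro t ht
      unfold pfun
      rw [norm_smul, smul_smul]
      simp only [Real.norm_eq_abs, mul_pow, sq_abs]
      rw [mul_comm t c]
      field_simp
    apply le_antisymm
    · rw [mul_comm, ← div_le_iff₀ hc]
      apply le_csInf (Dfun_nonempty hσ hQC hQK x v)
      rintro r ⟨s, hs, rfl⟩
      have hs' : 0 < s := Set.mem_Ioi.mp hs
      rw [div_le_iff₀ hc]
      have hle : Dfun σ Φ x (c • v) ≤ pfun σ Φ x (c • v) (s/c) :=
        Dfun_le_p hσ hQC hQK x _ (div_pos hs' hc)
      rw [hp (s/c) (div_pos hs' hc), div_mul_cancel₀ _ hc.ne'] at hle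
      exact hle.trans_eq (mul_comm _ _)
    · apply le_csInf (Dfun_nonempty hσ hQC hQK x (c • v))
      rintro r ⟨t, ht, rfl⟩
      have ht' : 0 < t := Set.mem_Ioi.mp ht
      rw [hp t ht']
      exact mul_le_mul_of_nonneg_left (Dfun_le_p hσ hQC hQK x v (mul_pos ht' hc)) hc.le
  rcases lt_trichotomy c 0 with hc | hc | hc
  · have h1 := hpos (-c) (by linarith)
    have h2 := Dfun_add_neg hσ hQC hQK x ((-c) • v)
    have h3 : -((-c) • v) = c • v := by module
    rw [h3] at h2
    linarith
  · subst hc; rw [zero_smul, Dfun_zero, zero_mul]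
  · exact hpos c hc

end D3

lemma exists_gradient [FiniteDimensional ℝ E] {σ : ℝ} {Φ : E → ℝ} (hσ : 0 < σ)
    (hQC : ∀ (a b : ℝ) (u w : E), 0 ≤ a → 0 ≤ b → a + b = 1 →
      Φ (a • u + b • w) ≤ a * Φ u + b * Φ w + σ/2 * (a*b) * ‖u - w‖^2)
    (hQK : ∀ (a b : ℝ) (u w : E), 0 ≤ a → 0 ≤ b → a + b = 1 →
      a * Φ u + b * Φ w - σ/2 * (a*b) * ‖u - w‖^2 ≤ Φ (a • u + b • w))
    (x : E) : ∃ dx : E, ∀ y, |Φ y - Φ x - ⟪dx, y - x⟫| ≤ σ/2 * ‖y - x‖^2 := by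
  have hlin : IsLinearMap ℝ (Dfun σ Φ x) :=
    ⟨Dfun_add hσ hQC hQK x, fun c v => Dfun_smul hσ hQC hQK x v c⟩
  let Lc : E →L[ℝ] ℝ := LinearMap.toContinuousLinearMap (IsLinearMap.mk' _ hlin)
  refine ⟨(InnerProductSpace.toDual ℝ E).symm Lc, fun y => ?_⟩
  have he : ⟪(InnerProductSpace.toDual ℝ E).symm Lc, y - x⟫ = Dfun σ Φ x (y - x) :=
    InnerProductSpace.toDual_symm_apply
  rw [he]
  exact Dfun_sandwich hσ hQC hQK x y

lemma coco {L : ℝ} (hL : 0 < L) (g : E → ℝ) (G : E → E)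
    (hlow : ∀ u v, g u + ⟪G u, v - u⟫ ≤ g v)
    (hup : ∀ u v, g v ≤ g u + ⟪G u, v - u⟫ + L/2 * ‖v - u‖^2) (x y : E) :
    ‖G x - G y‖^2 / L ≤ ⟪G x - G y, x - y⟫ := by
  have key : ∀ x y : E, g y + ⟪G y, x - y⟫ + ‖G x - G y‖^2/(2*L) ≤ g x := by
    intro x y
    set c := G x - G y with hcdef
    set z := x - (1/L) • c with hz
    have h1 := hlow y z
    have h2 := hup x z
    have e1 : z - x = -((1/L) • c) := by rw [hz]; module
    have e2 : ⟪G x, z - x⟫ = -((1/L) * ⟪G x, c⟫) := by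
      rw [e1, inner_neg_right, real_inner_smul_right]
    have e3 : ‖z - x‖^2 = (1/L)^2 * ‖c‖^2 := by
      rw [e1, norm_neg, norm_smul, mul_pow, Real.norm_eq_abs, sq_abs]
    have e4 : ⟪G y, z - y⟫ = ⟪G y, x - y⟫ - (1/L)*⟪G y, c⟫ := by
      have : z - y = (x - y) + (-((1/L) • c)) := by rw [hz]; module
      rw [this, inner_add_right, inner_neg_right, real_inner_smul_right]
      ring
    have e5 : ⟪G x, c⟫ - ⟪G y, c⟫ = ‖c‖^2 := by
      rw [← inner_sub_left, ← hcdef, real_inner_self_eq_norm_sq]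
    have e6 : L/2 * ((1/L)^2 * ‖c‖^2) = ‖c‖^2/(2*L) := by
      field_simp
    have e7 : (1/L)*⟪G x, c⟫ - (1/L)*⟪G y, c⟫ = (1/L)*‖c‖^2 := by
      rw [← mul_sub, e5]
    have e8 : (1/L)*‖c‖^2 - ‖c‖^2/(2*L) = ‖c‖^2/(2*L) := by
      field_simp; ring
    rw [e4] at h1
    rw [e2, e3] at h2
    linarith [h1, h2, e6, e7, e8]
  have k1 := key x y
  have k2 := key y x
  have e9 : ⟪G y, x - y⟫ + ⟪G x, y - x⟫ = -⟪G x - G y, x - y⟫ := by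
    have : y - x = -(x - y) := by module
    rw [this, inner_neg_right, inner_sub_left]
    ring
  have e10 : ‖G y - G x‖ = ‖G x - G y‖ := norm_sub_rev _ _
  rw [e10] at k2
  have hLne : (2*L) ≠ 0 := by positivity
  have : ‖G x - G y‖^2/(2*L) + ‖G x - G y‖^2/(2*L) = ‖G x - G y‖^2/L := by
    field_simp; ring
  linarith [k1, k2, e9, this]

lemma quad_identity (σ : ℝ) (u v : E) :
    σ/2*‖v‖^2 - σ/2*‖u‖^2 - σ*⟪u, v - u⟫ = σ/2*‖v - u‖^2 := by
  have h1 : ‖v - u‖^2 = ‖v‖^2 - 2*⟪v,u⟫ + ‖u‖^2 := norm_sub_sq_real v u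
  have h2 : ⟪u, v - u⟫ = ⟪u,v⟫ - ‖u‖^2 := by
    rw [inner_sub_right, real_inner_self_eq_norm_sq]
  have h3 : ⟪v,u⟫ = ⟪u,v⟫ := real_inner_comm u v
  rw [h2, h1, h3]
  ring

lemma grad_lipschitz {σ : ℝ} {Φ : E → ℝ} (hσ : 0 < σ) (d : E → E)
    (hA : ∀ x y, |Φ y - Φ x - ⟪d x, y - x⟫| ≤ σ/2 * ‖y - x‖^2) (x y : E) :
    ‖d x - d y‖ ≤ σ * ‖x - y‖ := by
  have hA' : ∀ u v : E, |Φ v - Φ u - ⟪d u, v - u⟫| ≤ σ/2 * ‖v - u‖^2 := fun u v => hA u v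
  have hinner : ∀ (p : E) (u v : E), ⟪p + σ • u, v - u⟫ = ⟪p, v - u⟫ + σ*⟪u, v - u⟫ := by
    intro p u v
    rw [inner_add_left, real_inner_smul_left]
  have h2σ : (0:ℝ) < 2*σ := by linarith
  -- g₁ = Φ + q, G₁ = d + σ•id
  have hc1 := coco h2σ (fun z => Φ z + σ/2*‖z‖^2) (fun z => d z + σ • z)
    (fun u v => by
      rw [hinner]
      have := (abs_le.mp (hA' u v)).1
      have hq := quad_identity σ u v
      linarith)
    (fun u v => by
      rw [hinner]
      have := (abs_le.mp (hA' u v)).2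
      have hq := quad_identity σ u v
      nlinarith [sq_nonneg ‖v - u‖])
    x y
  -- g₂ = q - Φ, G₂ = σ•id - d
  have hinner2 : ∀ (u v : E), ⟪σ • u - d u, v - u⟫ = σ*⟪u, v - u⟫ - ⟪d u, v - u⟫ := by
    intro u v
    rw [inner_sub_left, real_inner_smul_left]
  have hc2 := coco h2σ (fun z => σ/2*‖z‖^2 - Φ z) (fun z => σ • z - d z)
    (fun u v => by
      rw [hinner2]
      have := (abs_le.mp (hA' u v)).2
      have hq := quad_identity σ u v
      linarith)
    (fun u v => by
      rw [hinner2]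
      have := (abs_le.mp (hA' u v)).1
      have hq := quad_identity σ u v
      nlinarith [sq_nonneg ‖v - u‖])
    x y
  set a := (d x + σ • x) - (d y + σ • y) with ha
  set b := (σ • x - d x) - (σ • y - d y) with hb
  have hab : a + b = (2*σ) • (x - y) := by rw [ha, hb]; module
  have hamb : a - b = (2:ℝ) • (d x - d y) := by rw [ha, hb]; module
  have hsum : ⟪a, x - y⟫ + ⟪b, x - y⟫ = 2*σ*‖x - y‖^2 := by
    rw [← inner_add_left, hab, real_inner_smul_left, real_inner_self_eq_norm_sq]
  have hsq : ‖a‖^2 + ‖b‖^2 ≤ 4*σ^2*‖x - y‖^2 := by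
    have h1 : ‖a‖^2/(2*σ) + ‖b‖^2/(2*σ) ≤ 2*σ*‖x-y‖^2 := by linarith [hc1, hc2, hsum]
    have h2 : ‖a‖^2/(2*σ) + ‖b‖^2/(2*σ) = (‖a‖^2 + ‖b‖^2)/(2*σ) := by ring
    rw [h2, div_le_iff₀ h2σ] at h1
    nlinarith [h1]
  have hpar : ‖a - b‖^2 + ‖a + b‖^2 = 2*‖a‖^2 + 2*‖b‖^2 := by
    nlinarith [norm_add_sq_real a b, norm_sub_sq_real a b]
  have habn : ‖a + b‖^2 = 4*σ^2*‖x - y‖^2 := by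
    rw [hab, norm_smul, mul_pow, Real.norm_eq_abs, sq_abs]
    ring
  have hambn : ‖a - b‖^2 = 4*‖d x - d y‖^2 := by
    rw [hamb, norm_smul, mul_pow, Real.norm_eq_abs, sq_abs]
    norm_num
  have hfin : ‖d x - d y‖^2 ≤ (σ*‖x - y‖)^2 := by nlinarith [hsq, hpar, habn, hambn]
  have h1 : (0:ℝ) ≤ ‖d x - d y‖ := norm_nonneg _
  have h2 : (0:ℝ) ≤ σ*‖x - y‖ := by positivity
  exact (pow_le_pow_iff_left₀ h1 h2 two_ne_zero).mp hfin

/-- Converse: if `Φ + (σ/2)‖·‖²` is convex and `Φ - (σ/2)‖·‖²` is concave for some σ > 0,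
then `Φ` is differentiable with σ-Lipschitz gradient (σ-strongly smooth). -/
theorem stmt5 (N : ℕ) (σ : ℝ) (hσ : 0 < σ)
    (Φ : EuclideanSpace ℝ (Fin N) → ℝ)
    (hconv : ConvexOn ℝ Set.univ (fun x => Φ x + (σ / 2) * ‖x‖ ^ 2))
    (hconc : ConcaveOn ℝ Set.univ (fun x => Φ x - (σ / 2) * ‖x‖ ^ 2)) :
    Differentiable ℝ Φ ∧ ∀ x y, ‖fderiv ℝ Φ x - fderiv ℝ Φ y‖ ≤ σ * ‖x - y‖ := by
  have hQC := QC_of_convex hconv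
  have hQK := QK_of_concave hconc
  choose d hd using fun x => exists_gradient hσ hQC hQK x
  have hdiff : ∀ x, HasFDerivAt Φ (innerSL ℝ (d x)) x := by
    intro x
    rw [hasFDerivAt_iff_isLittleO, Asymptotics.isLittleO_iff]
    intro c hc
    rw [Metric.eventually_nhds_iff]
    refine ⟨2*c/σ, by positivity, fun y hy => ?_⟩
    rw [dist_eq_norm] at hy
    have h1 := hd x y
    have h2 : (innerSL ℝ (d x)) (y - x) = ⟪d x, y - x⟫ := rfl
    rw [Real.norm_eq_abs, h2]
    calc |Φ y - Φ x - ⟪d x, y - x⟫| ≤ σ/2 * ‖y - x‖^2 := h1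
      _ = σ/2 * ‖y - x‖ * ‖y - x‖ := by ring
      _ ≤ σ/2 * (2*c/σ) * ‖y - x‖ := by
          apply mul_le_mul_of_nonneg_right _ (norm_nonneg _)
          exact mul_le_mul_of_nonneg_left hy.le (by positivity)
      _ = c * ‖y - x‖ := by field_simp
  refine ⟨fun x => (hdiff x).differentiableAt, fun x y => ?_⟩
  rw [(hdiff x).fderiv, (hdiff y).fderiv, ← map_sub, innerSL_apply_norm ℝ _]
  exact grad_lipschitz hσ d hd x y
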